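/- Every 3-cyclic monotone operator T : X → 2^X on a real Hilbert space X is 3*-monotone. -/

import Mathlib

/-- Every 3-cyclic monotone operator on a real Hilbert space is 3*-monotone. -/
theorem threeCyclic_is_threeStar
    {X : Type*} [NormedAddCommGroup X] [InnerProductSpace ℝ X] [CompleteSpace X]
    (T : X → Set X)
    (h3cm : ∀ x x' y y' z z', x' ∈ T x → y' ∈ T y → z' ∈ T z →
      (0:ℝ) ≤ inner ℝ (x - y) x' + inner ℝ (y - z) y' + inner ℝ (z - x) z') :
    (∀ x x' y y', x' ∈ T x → y' ∈ T y → (0:ℝ) ≤ inner ℝ (x - y) (x' - y')) ∧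
    (∀ z, (T z).Nonempty → ∀ x x', x' ∈ T x →
      BddAbove {r : ℝ | ∃ y y', y' ∈ T y ∧ r = inner ℝ (z - y) (y' - x')}) := by
  constructor
  · intro x x' y y' hx hy
    have h := h3cm x x' y y' x x' hx hy hx
    have e : (inner ℝ (x - y) x' + inner ℝ (y - x) y' + inner ℝ (x - x) x' : ℝ)
        = inner ℝ (x - y) (x' - y') := by
      simp [inner_sub_left, inner_sub_right]; ring
    linarith [e ▸ h]
  · intro z hz x x' hx
    obtain ⟨z', hz'⟩ := hz
    refine ⟨inner ℝ (x - z) x' + inner ℝ (z - x) z', ?_⟩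
    rintro r ⟨y, y', hy, rfl⟩
    have h := h3cm x x' y y' z z' hx hy hz'
    have e : (inner ℝ (z - y) (y' - x') : ℝ)
        = (inner ℝ (x - z) x' + inner ℝ (z - x) z')
          - (inner ℝ (x - y) x' + inner ℝ (y - z) y' + inner ℝ (z - x) z') := by
      simp [inner_sub_left, inner_sub_right]; ring
    rw [e]; linarith
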